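/- The Fintushel–Stern invariant of Σ(2,11,19) equals −1; that is, with a = 2·11·19 = 418, one has (2/418) − 3 + 3 + Σ_{i=1}^{3} (2/aᵢ) Σ_{k=1}^{aᵢ−1} cot(π·418·k/aᵢ²) · cot(πk/aᵢ) · sin²(πk/aᵢ) = −1, where (a₁, a₂, a₃) = (2, 11, 19) and cot x = cos x / sin x. -/

import Mathlib

open Real Finset


/-- cot is π-periodic (as a ratio, unconditionally). -/
lemma cot_add_int_mul_pi (x : ℝ) (q : ℤ) :
    Real.cos (x + q*π) / Real.sin (x + q*π) = Real.cos x / Real.sin x := by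
  rw [Real.cos_add_int_mul_pi, Real.sin_add_int_mul_pi, mul_div_mul_left]
  positivity

/-- Dirichlet kernel identity. -/
lemma dirichlet (m : ℕ) (θ : ℝ) :
    Real.sin ((2*m+1)*θ) = Real.sin θ * (1 + 2 * ∑ j ∈ Icc 1 m, Real.cos (2*j*θ)) := by
  induction m with
  | zero => simp
  | succ n ih =>
    rw [Finset.sum_Icc_succ_top (by omega)]
    have key : Real.sin ((2*(n+1)+1)*θ) = Real.sin ((2*n+1)*θ) + 2 * Real.sin θ * Real.cos (2*(n+1)*θ) := by
      have e1 : (2*(n+1)+1 : ℝ)*θ = 2*(n+1)*θ + θ := by ring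
      have e2 : (2*n+1 : ℝ)*θ = 2*(n+1)*θ - θ := by ring
      rw [e1, e2, Real.sin_add, Real.sin_sub]; ring
    push_cast at key ⊢
    rw [key, ih]; push_cast; ring

/-- Sum of cosines of equally spaced angles. -/
lemma sum_cos_eq_neg_one (p j : ℕ) (hj : 0 < j) (hjp : j < p) :
    ∑ k ∈ Icc 1 (p-1), Real.cos (2*j*(π*k/p)) = -1 := by
  have hp : 0 < p := lt_trans hj hjp
  set z : ℂ := Complex.exp (2*π*j/p * Complex.I) with hz
  have hzk : ∀ k : ℕ, z ^ k = Complex.exp ((2*(j:ℝ)*(π*k/p) : ℝ) * Complex.I) := by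
    intro k
    rw [hz, ← Complex.exp_nat_mul]
    congr 1
    push_cast
    field_simp
  have hz1 : z ≠ 1 := by
    rw [hz, Ne, Complex.exp_eq_one_iff]
    rintro ⟨n, hn⟩
    have h2 := congrArg Complex.im hn
    simp [Complex.mul_im, Complex.div_im, Complex.mul_re] at h2
    have hp0 : (p:ℝ) ≠ 0 := Nat.cast_ne_zero.2 hp.ne'
    have hre : 2*π*(j:ℝ) = n * (2*π) * p := by
      field_simp at h2
      rw [h2]; ring
    have hj' : (j:ℝ) = n * p := by
      have h3 : (2*π) * (j:ℝ) = (2*π) * ((n:ℝ)*p) := by ring_nf; ring_nf at hre; linarith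
      exact mul_left_cancel₀ (by positivity) h3
    have hint : (j:ℤ) = n * p := by exact_mod_cast hj'
    have h1 : (0:ℤ) < j := by exact_mod_cast hj
    have h2' : (j:ℤ) < p := by exact_mod_cast hjp
    have hp' : (0:ℤ) < p := by exact_mod_cast hp
    have hn1 : 1 ≤ n := by nlinarith
    nlinarith [mul_le_mul_of_nonneg_right hn1 (le_of_lt hp')]
  have hgeom : ∑ k ∈ Finset.range p, z ^ k = 0 := by
    have hzp : z ^ p = 1 := by
      rw [hzk p]
      have : (2*(j:ℝ)*(π*p/p) : ℝ) = 2*π*j := by field_simp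
      rw [this]
      have : ((2*π*(j:ℝ) : ℝ) : ℂ) * Complex.I = (j:ℤ) * (2*π*Complex.I) := by push_cast; ring
      rw [this, Complex.exp_int_mul_two_pi_mul_I]
    have := geom_sum_eq hz1 p
    rw [this, hzp, sub_self, zero_div]
  have hre : ∀ k : ℕ, Real.cos (2*j*(π*k/p)) = (z ^ k).re := by
    intro k; rw [hzk k, Complex.exp_ofReal_mul_I_re]
  have hrange : ∑ k ∈ Finset.range p, Real.cos (2*j*(π*k/p)) = 0 := by
    have : ∑ k ∈ Finset.range p, Real.cos (2*j*(π*k/p)) = (∑ k ∈ Finset.range p, z ^ k).re := by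
      rw [Complex.re_sum]; exact Finset.sum_congr rfl fun k _ => hre k
    rw [this, hgeom, Complex.zero_re]
  have hsplit : Finset.range p = insert 0 (Icc 1 (p-1)) := by
    ext x
    simp [Finset.mem_range, Finset.mem_insert, Finset.mem_Icc]
    omega
  rw [hsplit, Finset.sum_insert (by simp)] at hrange
  simp only [Nat.cast_zero, mul_zero, zero_div, mul_zero] at hrange
  rw [Real.cos_zero] at hrange
  linarith

lemma sin_pos' (p k : ℕ) (hk1 : 1 ≤ k) (hk2 : k < p) : 0 < Real.sin (π*k/p) := by
  have hp : 0 < p := by omega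
  apply Real.sin_pos_of_pos_of_lt_pi
  · have h0 : (0:ℝ) < k := by exact_mod_cast hk1
    have hp' : (0:ℝ) < p := by exact_mod_cast hp
    positivity
  · rw [div_lt_iff₀ (by exact_mod_cast hp)]
    have hklt : (k:ℝ) < p := by exact_mod_cast hk2
    nlinarith [Real.pi_pos]

/-- `D(l) = Σ_k sin((2l+1)θ_k)/sin θ_k = p - 1 - 2l`. -/
lemma dirichlet_sum (p l : ℕ) (hp : 2 ≤ p) (hl : l ≤ p - 1) :
    ∑ k ∈ Icc 1 (p-1), Real.sin ((2*l+1)*(π*k/p)) / Real.sin (π*k/p)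
      = (p:ℝ) - 1 - 2*l := by
  have hp0 : 0 < p := by omega
  have step : ∀ k ∈ Icc 1 (p-1), Real.sin ((2*l+1)*(π*k/p)) / Real.sin (π*k/p)
      = 1 + 2 * ∑ j ∈ Icc 1 l, Real.cos (2*j*(π*k/p)) := by
    intro k hk
    rw [Finset.mem_Icc] at hk
    have hs := sin_pos' p k hk.1 (by omega)
    rw [dirichlet l (π*k/p)]
    field_simp

  rw [Finset.sum_congr rfl step, Finset.sum_add_distrib, Finset.sum_const, Nat.card_Icc]
  have swap : ∑ k ∈ Icc 1 (p-1), 2 * ∑ j ∈ Icc 1 l, Real.cos (2*j*(π*k/p))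
      = 2 * ∑ j ∈ Icc 1 l, ∑ k ∈ Icc 1 (p-1), Real.cos (2*j*(π*k/p)) := by
    rw [← Finset.mul_sum, Finset.sum_comm]
  rw [swap]
  have inner : ∀ j ∈ Icc 1 l, ∑ k ∈ Icc 1 (p-1), Real.cos (2*j*(π*k/p)) = -1 := by
    intro j hj
    rw [Finset.mem_Icc] at hj
    exact sum_cos_eq_neg_one p j hj.1 (by omega)
  rw [Finset.sum_congr rfl inner, Finset.sum_const, Nat.card_Icc]
  have h1 : p - 1 + 1 - 1 = p - 1 := by omega
  have h2 : l + 1 - 1 = l := by omega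
  rw [h1, h2]
  have : ((p-1 : ℕ):ℝ) = (p:ℝ) - 1 := by
    have : (1:ℕ) ≤ p := by omega
    push_cast [Nat.cast_sub this]; ring
  simp [this]
  ring

/-- Master lemma: `Σ_k cot(θ_k) sin(2lθ_k) = p - 2l`. -/
lemma cot_sin_sum (p l : ℕ) (hp : 2 ≤ p) (hl1 : 1 ≤ l) (hl : l ≤ p - 1) :
    ∑ k ∈ Icc 1 (p-1), (Real.cos (π*k/p) / Real.sin (π*k/p)) * Real.sin (2*l*(π*k/p))
      = (p:ℝ) - 2*l := by
  have hp0 : 0 < p := by omega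
  have step : ∀ k ∈ Icc 1 (p-1),
      (Real.cos (π*k/p) / Real.sin (π*k/p)) * Real.sin (2*l*(π*k/p))
      = (Real.sin ((2*l+1)*(π*k/p)) / Real.sin (π*k/p)
        + Real.sin ((2*((l-1:ℕ):ℝ)+1)*(π*k/p)) / Real.sin (π*k/p)) / 2 := by
    intro k hk
    rw [Finset.mem_Icc] at hk
    have hs := sin_pos' p k hk.1 (by omega)
    set θ := π*k/p
    have hodd : ((l-1:ℕ):ℝ) = (l:ℝ) - 1 := by
      push_cast [Nat.cast_sub hl1]; ring
    rw [hodd, show (2*((l:ℝ)-1)+1) = 2*(l:ℝ)-1 from by ring]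
    have key : Real.sin ((2*(l:ℝ)+1)*θ) + Real.sin ((2*(l:ℝ)-1)*θ)
        = 2 * (Real.cos θ * Real.sin (2*(l:ℝ)*θ)) := by
      have e1 : (2*(l:ℝ)+1)*θ = 2*(l:ℝ)*θ + θ := by ring
      have e2 : (2*(l:ℝ)-1)*θ = 2*(l:ℝ)*θ - θ := by ring
      rw [e1, e2, Real.sin_add, Real.sin_sub]
      ring
    rw [← add_div, key]
    field_simp
  rw [Finset.sum_congr rfl step]
  rw [← Finset.sum_div, Finset.sum_add_distrib]
  rw [dirichlet_sum p l hp hl, dirichlet_sum p (l-1) hp (by omega)]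
  have : ((l-1 : ℕ):ℝ) = (l:ℝ) - 1 := by
    push_cast [Nat.cast_sub hl1]; ring
  rw [this]
  ring

lemma S11 : ∑ x ∈ (Finset.Icc 1 10 : Finset ℕ),
    Real.cos (π * 418 * x / 121) / Real.sin (π * 418 * x / 121) *
      (Real.cos (π * x / 11) / Real.sin (π * x / 11)) * Real.sin (π * x / 11) ^ 2
    = -7/2 := by
  have step : ∀ k ∈ (Finset.Icc 1 10 : Finset ℕ),
      Real.cos (π * 418 * k / 121) / Real.sin (π * 418 * k / 121) *
        (Real.cos (π * k / 11) / Real.sin (π * k / 11)) * Real.sin (π * k / 11) ^ 2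
      = (1/2) * ((Real.cos (π*5*k/11) / Real.sin (π*5*k/11)) * Real.sin (2*π*k/11)) := by
    intro k hk
    rw [Finset.mem_Icc] at hk
    have hs : 0 < Real.sin (π*k/11) := sin_pos' 11 k hk.1 (by omega)
    rw [show π*418*(k:ℝ)/121 = π*5*(k:ℝ)/11 + ((3*k : ℕ):ℤ)*π from by push_cast; ring,
      cot_add_int_mul_pi,
      show 2*π*(k:ℝ)/11 = 2*(π*(k:ℝ)/11) from by ring, Real.sin_two_mul]
    have key : ∀ c5 s5 c s : ℝ, s ≠ 0 → c5/s5 * (c/s) * s^2 = 1/2*(c5/s5*(2*s*c)) := by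
      intro c5 s5 c s hsne
      have hcs : c/s*s^2 = c*s := by rw [sq, ← mul_assoc, div_mul_cancel₀ _ hsne]
      calc c5/s5*(c/s)*s^2 = c5/s5*(c/s*s^2) := by ring
        _ = c5/s5*(c*s) := by rw [hcs]
        _ = 1/2*(c5/s5*(2*s*c)) := by ring
    exact key _ _ _ _ hs.ne'
  rw [Finset.sum_congr rfl step, ← Finset.mul_sum]
  have reidx : ∑ k ∈ (Finset.Icc 1 10 : Finset ℕ), (Real.cos (π*5*k/11)/Real.sin (π*5*k/11)) * Real.sin (2*π*k/11)
      = ∑ r ∈ (Finset.Icc 1 10 : Finset ℕ), (Real.cos (π*r/11)/Real.sin (π*r/11)) * Real.sin (18*(π*r/11)) := by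
    apply Finset.sum_nbij' (i := fun k => 5*k%11) (j := fun r => 9*r%11)
      (by decide) (by decide) (by decide) (by decide)
    intro k hk
    fin_cases hk
    · -- k = 1
      have hr : (5*1%11 : ℕ) = 5 := by norm_num
      rw [hr]
      rw [show π*5*((1:ℕ):ℝ)/11 = π*((5:ℕ):ℝ)/11 + (0:ℤ)*π from by push_cast; ring,
        cot_add_int_mul_pi,
        show (18:ℝ)*(π*((5:ℕ):ℝ)/11) = 2*π*((1:ℕ):ℝ)/11 + (4:ℤ)*(2*π) from by push_cast; ring,
        Real.sin_add_int_mul_two_pi]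
    · -- k = 2
      have hr : (5*2%11 : ℕ) = 10 := by norm_num
      rw [hr]
      rw [show π*5*((2:ℕ):ℝ)/11 = π*((10:ℕ):ℝ)/11 + (0:ℤ)*π from by push_cast; ring,
        cot_add_int_mul_pi,
        show (18:ℝ)*(π*((10:ℕ):ℝ)/11) = 2*π*((2:ℕ):ℝ)/11 + (8:ℤ)*(2*π) from by push_cast; ring,
        Real.sin_add_int_mul_two_pi]
    · -- k = 3
      have hr : (5*3%11 : ℕ) = 4 := by norm_num
      rw [hr]
      rw [show π*5*((3:ℕ):ℝ)/11 = π*((4:ℕ):ℝ)/11 + (1:ℤ)*π from by push_cast; ring,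
        cot_add_int_mul_pi,
        show (18:ℝ)*(π*((4:ℕ):ℝ)/11) = 2*π*((3:ℕ):ℝ)/11 + (3:ℤ)*(2*π) from by push_cast; ring,
        Real.sin_add_int_mul_two_pi]
    · -- k = 4
      have hr : (5*4%11 : ℕ) = 9 := by norm_num
      rw [hr]
      rw [show π*5*((4:ℕ):ℝ)/11 = π*((9:ℕ):ℝ)/11 + (1:ℤ)*π from by push_cast; ring,
        cot_add_int_mul_pi,
        show (18:ℝ)*(π*((9:ℕ):ℝ)/11) = 2*π*((4:ℕ):ℝ)/11 + (7:ℤ)*(2*π) from by push_cast; ring,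
        Real.sin_add_int_mul_two_pi]
    · -- k = 5
      have hr : (5*5%11 : ℕ) = 3 := by norm_num
      rw [hr]
      rw [show π*5*((5:ℕ):ℝ)/11 = π*((3:ℕ):ℝ)/11 + (2:ℤ)*π from by push_cast; ring,
        cot_add_int_mul_pi,
        show (18:ℝ)*(π*((3:ℕ):ℝ)/11) = 2*π*((5:ℕ):ℝ)/11 + (2:ℤ)*(2*π) from by push_cast; ring,
        Real.sin_add_int_mul_two_pi]
    · -- k = 6
      have hr : (5*6%11 : ℕ) = 8 := by norm_num
      rw [hr]
      rw [show π*5*((6:ℕ):ℝ)/11 = π*((8:ℕ):ℝ)/11 + (2:ℤ)*π from by push_cast; ring,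
        cot_add_int_mul_pi,
        show (18:ℝ)*(π*((8:ℕ):ℝ)/11) = 2*π*((6:ℕ):ℝ)/11 + (6:ℤ)*(2*π) from by push_cast; ring,
        Real.sin_add_int_mul_two_pi]
    · -- k = 7
      have hr : (5*7%11 : ℕ) = 2 := by norm_num
      rw [hr]
      rw [show π*5*((7:ℕ):ℝ)/11 = π*((2:ℕ):ℝ)/11 + (3:ℤ)*π from by push_cast; ring,
        cot_add_int_mul_pi,
        show (18:ℝ)*(π*((2:ℕ):ℝ)/11) = 2*π*((7:ℕ):ℝ)/11 + (1:ℤ)*(2*π) from by push_cast; ring,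
        Real.sin_add_int_mul_two_pi]
    · -- k = 8
      have hr : (5*8%11 : ℕ) = 7 := by norm_num
      rw [hr]
      rw [show π*5*((8:ℕ):ℝ)/11 = π*((7:ℕ):ℝ)/11 + (3:ℤ)*π from by push_cast; ring,
        cot_add_int_mul_pi,
        show (18:ℝ)*(π*((7:ℕ):ℝ)/11) = 2*π*((8:ℕ):ℝ)/11 + (5:ℤ)*(2*π) from by push_cast; ring,
        Real.sin_add_int_mul_two_pi]
    · -- k = 9
      have hr : (5*9%11 : ℕ) = 1 := by norm_num
      rw [hr]
      rw [show π*5*((9:ℕ):ℝ)/11 = π*((1:ℕ):ℝ)/11 + (4:ℤ)*π from by push_cast; ring,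
        cot_add_int_mul_pi,
        show (18:ℝ)*(π*((1:ℕ):ℝ)/11) = 2*π*((9:ℕ):ℝ)/11 + (0:ℤ)*(2*π) from by push_cast; ring,
        Real.sin_add_int_mul_two_pi]
    · -- k = 10
      have hr : (5*10%11 : ℕ) = 6 := by norm_num
      rw [hr]
      rw [show π*5*((10:ℕ):ℝ)/11 = π*((6:ℕ):ℝ)/11 + (4:ℤ)*π from by push_cast; ring,
        cot_add_int_mul_pi,
        show (18:ℝ)*(π*((6:ℕ):ℝ)/11) = 2*π*((10:ℕ):ℝ)/11 + (4:ℤ)*(2*π) from by push_cast; ring,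
        Real.sin_add_int_mul_two_pi]
  rw [reidx]
  have h := cot_sin_sum 11 9 (by norm_num) (by norm_num) (by norm_num)
  norm_num at h
  rw [h]
  norm_num

lemma S19 : ∑ x ∈ (Finset.Icc 1 18 : Finset ℕ),
    Real.cos (π * 418 * x / 361) / Real.sin (π * 418 * x / 361) *
      (Real.cos (π * x / 19) / Real.sin (π * x / 19)) * Real.sin (π * x / 19) ^ 2
    = -7/2 := by
  have step : ∀ k ∈ (Finset.Icc 1 18 : Finset ℕ),
      Real.cos (π * 418 * k / 361) / Real.sin (π * 418 * k / 361) *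
        (Real.cos (π * k / 19) / Real.sin (π * k / 19)) * Real.sin (π * k / 19) ^ 2
      = (1/2) * ((Real.cos (π*3*k/19) / Real.sin (π*3*k/19)) * Real.sin (2*π*k/19)) := by
    intro k hk
    rw [Finset.mem_Icc] at hk
    have hs : 0 < Real.sin (π*k/19) := sin_pos' 19 k hk.1 (by omega)
    rw [show π*418*(k:ℝ)/361 = π*3*(k:ℝ)/19 + ((k : ℕ):ℤ)*π from by push_cast; ring,
      cot_add_int_mul_pi,
      show 2*π*(k:ℝ)/19 = 2*(π*(k:ℝ)/19) from by ring, Real.sin_two_mul]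
    have key : ∀ c5 s5 c s : ℝ, s ≠ 0 → c5/s5 * (c/s) * s^2 = 1/2*(c5/s5*(2*s*c)) := by
      intro c5 s5 c s hsne
      have hcs : c/s*s^2 = c*s := by rw [sq, ← mul_assoc, div_mul_cancel₀ _ hsne]
      calc c5/s5*(c/s)*s^2 = c5/s5*(c/s*s^2) := by ring
        _ = c5/s5*(c*s) := by rw [hcs]
        _ = 1/2*(c5/s5*(2*s*c)) := by ring
    exact key _ _ _ _ hs.ne'
  rw [Finset.sum_congr rfl step, ← Finset.mul_sum]
  have reidx : ∑ k ∈ (Finset.Icc 1 18 : Finset ℕ), (Real.cos (π*3*k/19)/Real.sin (π*3*k/19)) * Real.sin (2*π*k/19)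
      = ∑ r ∈ (Finset.Icc 1 18 : Finset ℕ), (Real.cos (π*r/19)/Real.sin (π*r/19)) * Real.sin (26*(π*r/19)) := by
    apply Finset.sum_nbij' (i := fun k => 3*k%19) (j := fun r => 13*r%19)
      (by decide) (by decide) (by decide) (by decide)
    intro k hk
    fin_cases hk
    · have hr : (3*1%19 : ℕ) = 3 := by norm_num
      rw [hr]
      rw [show π*3*((1:ℕ):ℝ)/19 = π*((3:ℕ):ℝ)/19 + (0:ℤ)*π from by push_cast; ring,
        cot_add_int_mul_pi,
        show (26:ℝ)*(π*((3:ℕ):ℝ)/19) = 2*π*((1:ℕ):ℝ)/19 + (2:ℤ)*(2*π) from by push_cast; ring,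
        Real.sin_add_int_mul_two_pi]
    · have hr : (3*2%19 : ℕ) = 6 := by norm_num
      rw [hr]
      rw [show π*3*((2:ℕ):ℝ)/19 = π*((6:ℕ):ℝ)/19 + (0:ℤ)*π from by push_cast; ring,
        cot_add_int_mul_pi,
        show (26:ℝ)*(π*((6:ℕ):ℝ)/19) = 2*π*((2:ℕ):ℝ)/19 + (4:ℤ)*(2*π) from by push_cast; ring,
        Real.sin_add_int_mul_two_pi]
    · have hr : (3*3%19 : ℕ) = 9 := by norm_num
      rw [hr]
      rw [show π*3*((3:ℕ):ℝ)/19 = π*((9:ℕ):ℝ)/19 + (0:ℤ)*π from by push_cast; ring,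
        cot_add_int_mul_pi,
        show (26:ℝ)*(π*((9:ℕ):ℝ)/19) = 2*π*((3:ℕ):ℝ)/19 + (6:ℤ)*(2*π) from by push_cast; ring,
        Real.sin_add_int_mul_two_pi]
    · have hr : (3*4%19 : ℕ) = 12 := by norm_num
      rw [hr]
      rw [show π*3*((4:ℕ):ℝ)/19 = π*((12:ℕ):ℝ)/19 + (0:ℤ)*π from by push_cast; ring,
        cot_add_int_mul_pi,
        show (26:ℝ)*(π*((12:ℕ):ℝ)/19) = 2*π*((4:ℕ):ℝ)/19 + (8:ℤ)*(2*π) from by push_cast; ring,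
        Real.sin_add_int_mul_two_pi]
    · have hr : (3*5%19 : ℕ) = 15 := by norm_num
      rw [hr]
      rw [show π*3*((5:ℕ):ℝ)/19 = π*((15:ℕ):ℝ)/19 + (0:ℤ)*π from by push_cast; ring,
        cot_add_int_mul_pi,
        show (26:ℝ)*(π*((15:ℕ):ℝ)/19) = 2*π*((5:ℕ):ℝ)/19 + (10:ℤ)*(2*π) from by push_cast; ring,
        Real.sin_add_int_mul_two_pi]
    · have hr : (3*6%19 : ℕ) = 18 := by norm_num
      rw [hr]
      rw [show π*3*((6:ℕ):ℝ)/19 = π*((18:ℕ):ℝ)/19 + (0:ℤ)*π from by push_cast; ring,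
        cot_add_int_mul_pi,
        show (26:ℝ)*(π*((18:ℕ):ℝ)/19) = 2*π*((6:ℕ):ℝ)/19 + (12:ℤ)*(2*π) from by push_cast; ring,
        Real.sin_add_int_mul_two_pi]
    · have hr : (3*7%19 : ℕ) = 2 := by norm_num
      rw [hr]
      rw [show π*3*((7:ℕ):ℝ)/19 = π*((2:ℕ):ℝ)/19 + (1:ℤ)*π from by push_cast; ring,
        cot_add_int_mul_pi,
        show (26:ℝ)*(π*((2:ℕ):ℝ)/19) = 2*π*((7:ℕ):ℝ)/19 + (1:ℤ)*(2*π) from by push_cast; ring,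
        Real.sin_add_int_mul_two_pi]
    · have hr : (3*8%19 : ℕ) = 5 := by norm_num
      rw [hr]
      rw [show π*3*((8:ℕ):ℝ)/19 = π*((5:ℕ):ℝ)/19 + (1:ℤ)*π from by push_cast; ring,
        cot_add_int_mul_pi,
        show (26:ℝ)*(π*((5:ℕ):ℝ)/19) = 2*π*((8:ℕ):ℝ)/19 + (3:ℤ)*(2*π) from by push_cast; ring,
        Real.sin_add_int_mul_two_pi]
    · have hr : (3*9%19 : ℕ) = 8 := by norm_num
      rw [hr]
      rw [show π*3*((9:ℕ):ℝ)/19 = π*((8:ℕ):ℝ)/19 + (1:ℤ)*π from by push_cast; ring,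
        cot_add_int_mul_pi,
        show (26:ℝ)*(π*((8:ℕ):ℝ)/19) = 2*π*((9:ℕ):ℝ)/19 + (5:ℤ)*(2*π) from by push_cast; ring,
        Real.sin_add_int_mul_two_pi]
    · have hr : (3*10%19 : ℕ) = 11 := by norm_num
      rw [hr]
      rw [show π*3*((10:ℕ):ℝ)/19 = π*((11:ℕ):ℝ)/19 + (1:ℤ)*π from by push_cast; ring,
        cot_add_int_mul_pi,
        show (26:ℝ)*(π*((11:ℕ):ℝ)/19) = 2*π*((10:ℕ):ℝ)/19 + (7:ℤ)*(2*π) from by push_cast; ring,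
        Real.sin_add_int_mul_two_pi]
    · have hr : (3*11%19 : ℕ) = 14 := by norm_num
      rw [hr]
      rw [show π*3*((11:ℕ):ℝ)/19 = π*((14:ℕ):ℝ)/19 + (1:ℤ)*π from by push_cast; ring,
        cot_add_int_mul_pi,
        show (26:ℝ)*(π*((14:ℕ):ℝ)/19) = 2*π*((11:ℕ):ℝ)/19 + (9:ℤ)*(2*π) from by push_cast; ring,
        Real.sin_add_int_mul_two_pi]
    · have hr : (3*12%19 : ℕ) = 17 := by norm_num
      rw [hr]
      rw [show π*3*((12:ℕ):ℝ)/19 = π*((17:ℕ):ℝ)/19 + (1:ℤ)*π from by push_cast; ring,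
        cot_add_int_mul_pi,
        show (26:ℝ)*(π*((17:ℕ):ℝ)/19) = 2*π*((12:ℕ):ℝ)/19 + (11:ℤ)*(2*π) from by push_cast; ring,
        Real.sin_add_int_mul_two_pi]
    · have hr : (3*13%19 : ℕ) = 1 := by norm_num
      rw [hr]
      rw [show π*3*((13:ℕ):ℝ)/19 = π*((1:ℕ):ℝ)/19 + (2:ℤ)*π from by push_cast; ring,
        cot_add_int_mul_pi,
        show (26:ℝ)*(π*((1:ℕ):ℝ)/19) = 2*π*((13:ℕ):ℝ)/19 + (0:ℤ)*(2*π) from by push_cast; ring,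
        Real.sin_add_int_mul_two_pi]
    · have hr : (3*14%19 : ℕ) = 4 := by norm_num
      rw [hr]
      rw [show π*3*((14:ℕ):ℝ)/19 = π*((4:ℕ):ℝ)/19 + (2:ℤ)*π from by push_cast; ring,
        cot_add_int_mul_pi,
        show (26:ℝ)*(π*((4:ℕ):ℝ)/19) = 2*π*((14:ℕ):ℝ)/19 + (2:ℤ)*(2*π) from by push_cast; ring,
        Real.sin_add_int_mul_two_pi]
    · have hr : (3*15%19 : ℕ) = 7 := by norm_num
      rw [hr]
      rw [show π*3*((15:ℕ):ℝ)/19 = π*((7:ℕ):ℝ)/19 + (2:ℤ)*π from by push_cast; ring,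
        cot_add_int_mul_pi,
        show (26:ℝ)*(π*((7:ℕ):ℝ)/19) = 2*π*((15:ℕ):ℝ)/19 + (4:ℤ)*(2*π) from by push_cast; ring,
        Real.sin_add_int_mul_two_pi]
    · have hr : (3*16%19 : ℕ) = 10 := by norm_num
      rw [hr]
      rw [show π*3*((16:ℕ):ℝ)/19 = π*((10:ℕ):ℝ)/19 + (2:ℤ)*π from by push_cast; ring,
        cot_add_int_mul_pi,
        show (26:ℝ)*(π*((10:ℕ):ℝ)/19) = 2*π*((16:ℕ):ℝ)/19 + (6:ℤ)*(2*π) from by push_cast; ring,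
        Real.sin_add_int_mul_two_pi]
    · have hr : (3*17%19 : ℕ) = 13 := by norm_num
      rw [hr]
      rw [show π*3*((17:ℕ):ℝ)/19 = π*((13:ℕ):ℝ)/19 + (2:ℤ)*π from by push_cast; ring,
        cot_add_int_mul_pi,
        show (26:ℝ)*(π*((13:ℕ):ℝ)/19) = 2*π*((17:ℕ):ℝ)/19 + (8:ℤ)*(2*π) from by push_cast; ring,
        Real.sin_add_int_mul_two_pi]
    · have hr : (3*18%19 : ℕ) = 16 := by norm_num
      rw [hr]
      rw [show π*3*((18:ℕ):ℝ)/19 = π*((16:ℕ):ℝ)/19 + (2:ℤ)*π from by push_cast; ring,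
        cot_add_int_mul_pi,
        show (26:ℝ)*(π*((16:ℕ):ℝ)/19) = 2*π*((18:ℕ):ℝ)/19 + (10:ℤ)*(2*π) from by push_cast; ring,
        Real.sin_add_int_mul_two_pi]
  rw [reidx]
  have h := cot_sin_sum 19 13 (by norm_num) (by norm_num) (by norm_num)
  norm_num at h
  rw [h]
  norm_num


/-- The Fintushel–Stern invariant
`R(a₁,…,a_n) = 2/a - 3 + n + Σᵢ (2/aᵢ) Σ_{k=1}^{aᵢ-1} cot(πak/aᵢ²) cot(πk/aᵢ) sin²(πk/aᵢ)`
where `a = a₁⋯a_n` and `cot x = cos x / sin x`. -/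
noncomputable def fintushelSternR {n : ℕ} (a : Fin n → ℕ) : ℝ :=
  2 / (∏ j, (a j : ℝ)) - 3 + n +
    ∑ i, (2 / (a i : ℝ)) *
      ∑ k ∈ Finset.Icc 1 (a i - 1),
        (Real.cos (Real.pi * (∏ j, (a j : ℝ)) * k / (a i : ℝ) ^ 2) /
            Real.sin (Real.pi * (∏ j, (a j : ℝ)) * k / (a i : ℝ) ^ 2)) *
          (Real.cos (Real.pi * k / (a i : ℝ)) / Real.sin (Real.pi * k / (a i : ℝ))) *
            (Real.sin (Real.pi * k / (a i : ℝ))) ^ 2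

/-- The Fintushel–Stern invariant of `Σ(2,11,19)` equals `-1`. -/
theorem fintushelStern_two_eleven_nineteen :
    fintushelSternR ![2, 11, 19] = -1 := by
  unfold fintushelSternR
  simp only [Fin.prod_univ_three, Fin.sum_univ_three, Matrix.cons_val_zero, Matrix.cons_val_one,
    Matrix.head_cons, Matrix.cons_val_two, Matrix.tail_cons]
  norm_num
  rw [S11, S19]
  norm_num
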